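/- Let (X, F, α, T) be an ergodic measure-preserving system with transfer operator P (adjoint of the Koopman operator). Suppose ψ ∈ L²(α), ∫ψ dα = 0, and ∑_{n≥0} ‖Pⁿψ‖_{L²} < ∞. Then σ² := lim_{N→∞} (1/N) ∫ (∑_{n=0}^{N-1} ψ∘Tⁿ)² dα exists and is finite. -/

import Mathlib

open MeasureTheory Filter

/-- Existence of the asymptotic variance in Gordin's theorem: for an ergodic
measure-preserving system with transfer operator `P = U*`, if `ψ ∈ L²` has mean zero and
`∑_n ‖Pⁿψ‖ < ∞`, then `σ² = lim (1/N) ∫ (∑_{n<N} ψ∘Tⁿ)² dα` exists and is finite. -/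
theorem stmt14 {X : Type*} [MeasurableSpace X] (α : Measure X) [IsProbabilityMeasure α]
    (T : X → X) (hT : MeasurePreserving T α α) (herg : Ergodic T α)
    (U P : Lp ℝ 2 α →L[ℝ] Lp ℝ 2 α)
    (hU : ∀ f : Lp ℝ 2 α, ⇑(U f) =ᵐ[α] fun x => f (T x))
    (hadj : ∀ f g : Lp ℝ 2 α, (inner ℝ (U f) g : ℝ) = inner ℝ f (P g))
    (ψ : Lp ℝ 2 α) (hmean : ∫ x, ψ x ∂α = 0)
    (hsum : Summable fun n : ℕ => ‖(P ^ n) ψ‖) :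
    ∃ σ2 : ℝ, Tendsto
      (fun N : ℕ => (N : ℝ)⁻¹ * ∫ x, (∑ n ∈ Finset.range N, ψ (T^[n] x)) ^ 2 ∂α)
      atTop (nhds σ2) := by
  classical
  -- the inner product as an integral
  have hinner : ∀ f g : Lp ℝ 2 α, (inner ℝ f g : ℝ) = ∫ x, f x * g x ∂α := by
    intro f g
    rw [L2.inner_def]
    simp [RCLike.inner_apply, mul_comm]
  -- U is an isometry for the inner product
  have hUinner : ∀ f g : Lp ℝ 2 α, (inner ℝ (U f) (U g) : ℝ) = inner ℝ f g := by
    intro f g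
    rw [hinner, hinner]
    have h1 : (fun x => (U f) x * (U g) x) =ᵐ[α] fun x => f (T x) * g (T x) := by
      filter_upwards [hU f, hU g] with x hf hg
      rw [hf, hg]
    rw [integral_congr_ae h1]
    have h2 : ∫ x, f x * g x ∂(Measure.map T α) = ∫ x, f (T x) * g (T x) ∂α := by
      apply integral_map hT.measurable.aemeasurable
      rw [hT.map_eq]
      exact (Lp.aestronglyMeasurable f).mul (Lp.aestronglyMeasurable g)
    rw [← h2, hT.map_eq]
  -- iterated adjoint relation
  have hadj_pow : ∀ (j : ℕ) (f g : Lp ℝ 2 α),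
      (inner ℝ ((U ^ j) f) g : ℝ) = inner ℝ f ((P ^ j) g) := by
    intro j
    induction j with
    | zero => intro f g; simp
    | succ n ih =>
      intro f g
      have h1 : (U ^ (n + 1)) f = (U ^ n) (U f) := by
        rw [pow_succ, ContinuousLinearMap.mul_apply]
      have h2 : (P ^ (n + 1)) g = P ((P ^ n) g) := by
        rw [pow_succ', ContinuousLinearMap.mul_apply]
      rw [h1, ih (U f) g, hadj, ← h2]
  -- the correlations
  set c : ℕ → ℝ := fun j => inner ℝ ψ ((P ^ j) ψ) with hc_def
  have hc0 : ∀ j, (inner ℝ ψ ((U ^ j) ψ) : ℝ) = c j := by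
    intro j
    rw [real_inner_comm, hadj_pow]
  have hUm : ∀ (m j : ℕ), (inner ℝ ((U ^ m) ψ) ((U ^ (m + j)) ψ) : ℝ) = c j := by
    intro m
    induction m with
    | zero => intro j; simpa using hc0 j
    | succ n ih =>
      intro j
      have h1 : (U ^ (n + 1)) ψ = U ((U ^ n) ψ) := by
        rw [pow_succ', ContinuousLinearMap.mul_apply]
      have h2 : (U ^ (n + 1 + j)) ψ = U ((U ^ (n + j)) ψ) := by
        have h : n + 1 + j = (n + j) + 1 := by omega
        rw [h, pow_succ', ContinuousLinearMap.mul_apply]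
      rw [h1, h2, hUinner, ih]
  -- summability of correlations
  have hcs : Summable c := by
    apply Summable.of_norm_bounded (hsum.mul_left ‖ψ‖)
    intro j
    exact norm_inner_le_norm ψ ((P ^ j) ψ)
  -- the partial Koopman sums
  set F : ℕ → Lp ℝ 2 α := fun N => ∑ n ∈ Finset.range N, (U ^ n) ψ with hF_def
  set d : ℕ → ℝ := fun k => c 0 + 2 * ∑ j ∈ Finset.range k, c (j + 1) with hd_def
  -- key combinatorial identity
  have hFd : ∀ N, (inner ℝ (F N) (F N) : ℝ) = ∑ k ∈ Finset.range N, d k := by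
    intro N
    induction N with
    | zero => simp [hF_def]
    | succ N ih =>
      have hF : F (N + 1) = F N + (U ^ N) ψ := Finset.sum_range_succ _ _
      have h1 : (inner ℝ (F N) ((U ^ N) ψ) : ℝ) = ∑ j ∈ Finset.range N, c (j + 1) := by
        rw [hF_def]
        simp only
        rw [sum_inner]
        have hterm : ∀ m ∈ Finset.range N,
            (inner ℝ ((U ^ m) ψ) ((U ^ N) ψ) : ℝ) = c (N - m) := by
          intro m hm
          have hmN : m + (N - m) = N := by
            have := Finset.mem_range.mp hm; omega
          have h := hUm m (N - m)
          rwa [hmN] at h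
        rw [Finset.sum_congr rfl hterm]
        rw [← Finset.sum_range_reflect (fun j => c (j + 1)) N]
        apply Finset.sum_congr rfl
        intro m hm
        have := Finset.mem_range.mp hm
        congr 1
        omega
      have h2 : (inner ℝ ((U ^ N) ψ) ((U ^ N) ψ) : ℝ) = c 0 := by
        simpa using hUm N 0
      rw [hF, real_inner_add_add_self, ih, h1, h2, Finset.sum_range_succ]
      simp only [hd_def]
      ring
  -- identification of the integral with the inner product
  have hUn_ae : ∀ n, ⇑((U ^ n) ψ) =ᵐ[α] fun x => ψ (T^[n] x) := by
    intro n
    induction n with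
    | zero => simp
    | succ n ih =>
      have h1 : (U ^ (n + 1)) ψ = U ((U ^ n) ψ) := by
        rw [pow_succ', ContinuousLinearMap.mul_apply]
      have h2 : (fun x => ((U ^ n) ψ) (T x)) =ᵐ[α] fun x => ψ (T^[n] (T x)) :=
        hT.quasiMeasurePreserving.ae_eq ih
      rw [h1]
      refine (hU ((U ^ n) ψ)).trans (h2.trans ?_)
      filter_upwards with x
      rw [← Function.iterate_succ_apply]
  have hFcoe : ∀ N, ⇑(F N) =ᵐ[α] fun x => ∑ n ∈ Finset.range N, ψ (T^[n] x) := by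
    intro N
    induction N with
    | zero =>
      simp only [hF_def, Finset.range_zero, Finset.sum_empty]
      exact (Lp.coeFn_zero ℝ 2 α).trans (by filter_upwards with x; simp)
    | succ N ih =>
      have hF : F (N + 1) = F N + (U ^ N) ψ := Finset.sum_range_succ _ _
      rw [hF]
      filter_upwards [Lp.coeFn_add (F N) ((U ^ N) ψ), ih, hUn_ae N] with x h1 h2 h3
      simp only [h1, Pi.add_apply, h2, h3, Finset.sum_range_succ]
  have hFint : ∀ N, ∫ x, (∑ n ∈ Finset.range N, ψ (T^[n] x)) ^ 2 ∂α
      = (inner ℝ (F N) (F N) : ℝ) := by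
    intro N
    rw [hinner]
    apply integral_congr_ae
    filter_upwards [hFcoe N] with x hx
    rw [hx]; ring
  -- the limit
  have hshift : Summable fun j => c (j + 1) := (summable_nat_add_iff 1).mpr hcs
  set σ2 : ℝ := c 0 + 2 * ∑' j, c (j + 1) with hσ2
  have hd_lim : Tendsto d atTop (nhds σ2) := by
    have h := hshift.hasSum.tendsto_sum_nat
    exact tendsto_const_nhds.add (h.const_mul 2)
  refine ⟨σ2, ?_⟩
  have hcesaro := hd_lim.cesaro
  apply hcesaro.congr
  intro N
  rw [hFint, hFd]
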